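/- If a complex A_0 → A_1 → ... → A_n in a triangulated category satisfies Hom(A_j[k], A_{j+k+1}) = 0 for all j ≥ 0 and k ≥ 1, then any two convolutions of the complex are isomorphic; if moreover Hom(A_j[k], A_{j+k+2}) = 0 for all j ≥ 0 and k ≥ 1, then a convolution exists. -/

import Mathlib

open CategoryTheory CategoryTheory.Limits CategoryTheory.Pretriangulated

variable {D : Type} [Category D] [Preadditive D] [HasZeroObject D] [HasShift D ℤ]
  [∀ n : ℤ, (CategoryTheory.shiftFunctor D n).Additive] [Pretriangulated D]

/-- `Z` is a (right) convolution of the complex `A_0 → A_1 → ⋯ → A_n`, i.e. the final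
object `B_n` of a Postnikov system: objects `B_0 = A_0, B_1, …, B_n` and morphisms
`g_j : B_{j−1} ⟶ A_j`, `h_j : A_j ⟶ B_j` (with `h_0 = id`) such that each
`B_{j−1} → A_j → B_j` extends to a distinguished triangle and `g_j ∘ h_{j−1} = f_j`. -/
def IsConvolution (n : ℕ) (A : ℕ → D) (f : ∀ j, A j ⟶ A (j + 1)) (Z : D) : Prop :=
  ∃ (B : ℕ → D) (e₀ : A 0 ≅ B 0) (g : ∀ j, B j ⟶ A (j + 1))
    (h : ∀ j, A (j + 1) ⟶ B (j + 1)),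
    (∀ j, ∃ w : B (j + 1) ⟶ (B j)⟦(1 : ℤ)⟧,
      Triangle.mk (g j) (h j) w ∈ distTriang D) ∧
    f 0 = e₀.hom ≫ g 0 ∧
    (∀ j, f (j + 1) = h j ≫ g (j + 1)) ∧
    Nonempty (Z ≅ B n)

set_option linter.unusedSectionVars false

lemma hom_zero_congr (A : ℕ → D) {X : D} {a b : ℤ} {m m' : ℕ} (ea : a = b) (e : m = m')
    (h : ∀ φ : X⟦a⟧ ⟶ A m, φ = 0) : ∀ φ : X⟦b⟧ ⟶ A m', φ = 0 := by
  subst ea e; exact h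

/-- inductive step for the vanishing of `Hom(B_i⟦k⟧, A (i+k+c))` along a Postnikov tower -/
lemma van_step (A : ℕ → D) {X Y : D} {j c : ℕ} {g : X ⟶ A (j + 1)} {h : A (j + 1) ⟶ Y}
    {w : Y ⟶ X⟦(1 : ℤ)⟧} (hT : Triangle.mk g h w ∈ distTriang D)
    (hA : ∀ k : ℕ, 1 ≤ k → ∀ φ : (A (j + 1))⟦(k : ℤ)⟧ ⟶ A (j + 1 + k + c), φ = 0)
    (hX : ∀ k : ℕ, 1 ≤ k → ∀ φ : X⟦(k : ℤ)⟧ ⟶ A (j + k + c), φ = 0) :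
    ∀ k : ℕ, 1 ≤ k → ∀ φ : Y⟦(k : ℤ)⟧ ⟶ A (j + 1 + k + c), φ = 0 := by
  intro k hk φ
  have hT' := Pretriangulated.Triangle.shift_distinguished _ hT (k : ℤ)
  have h2 : ((CategoryTheory.shiftFunctor (Triangle D) (k : ℤ)).obj
      (Triangle.mk g h w)).mor₂ ≫ φ = 0 := by
    have : h⟦(k : ℤ)⟧' ≫ φ = 0 := hA k hk _
    dsimp
    show ((k:ℤ).negOnePow • h⟦(k:ℤ)⟧') ≫ φ = 0
    rw [Linear.units_smul_comp, this, smul_zero]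
  obtain ⟨ψ, hψ⟩ := Triangle.yoneda_exact₃ _ hT' φ h2
  have hψ0 : ψ = 0 := by
    have base : ∀ φ' : X⟦((k + 1 : ℕ) : ℤ)⟧ ⟶ A (j + 1 + k + c), φ' = 0 :=
      hom_zero_congr A rfl (by omega) (hX (k + 1) (by omega))
    have e := CategoryTheory.shiftFunctorAdd' D (k : ℤ) 1 ((k + 1 : ℕ) : ℤ) (by push_cast; ring)
    have hz : e.hom.app X ≫ ψ = 0 := base _
    have : ψ = e.inv.app X ≫ (e.hom.app X ≫ ψ) := by
      exact (Iso.inv_hom_id_app_assoc e X ψ).symm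
    rw [this, hz, Limits.comp_zero]; rfl
  rw [hψ, hψ0, Limits.comp_zero]; rfl

/-- vanishing of `Hom(B_i⟦k⟧, A (i+k+c))` along a full Postnikov system -/
lemma van_tower (A : ℕ → D) (c : ℕ)
    (hvan : ∀ j k : ℕ, 1 ≤ k → ∀ φ : (A j)⟦(k : ℤ)⟧ ⟶ A (j + k + c), φ = 0)
    (B : ℕ → D) (e₀ : A 0 ≅ B 0) (g : ∀ j, B j ⟶ A (j + 1))
    (h : ∀ j, A (j + 1) ⟶ B (j + 1))
    (hT : ∀ j, ∃ w : B (j + 1) ⟶ (B j)⟦(1 : ℤ)⟧,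
      Triangle.mk (g j) (h j) w ∈ distTriang D) :
    ∀ i k : ℕ, 1 ≤ k → ∀ φ : (B i)⟦(k : ℤ)⟧ ⟶ A (i + k + c), φ = 0 := by
  intro i
  induction i with
  | zero =>
    intro k hk φ
    have h0 : e₀.hom⟦(k : ℤ)⟧' ≫ φ = 0 := hvan 0 k hk _
    calc φ = e₀.inv⟦(k : ℤ)⟧' ≫ (e₀.hom⟦(k : ℤ)⟧' ≫ φ) := by
            rw [← Category.assoc, ← CategoryTheory.Functor.map_comp, e₀.inv_hom_id,
              CategoryTheory.Functor.map_id, Category.id_comp]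
      _ = 0 := by rw [h0, Limits.comp_zero]
  | succ i ih =>
    obtain ⟨w, hw⟩ := hT i
    exact van_step A hw (fun k hk => hvan (i + 1) k hk) ih

/-- the type of partial data for the construction of a Postnikov system -/
abbrev ConvStage (A : ℕ → D) (f : ∀ j, A j ⟶ A (j + 1)) (j : ℕ) : Type _ :=
  Σ' (B : D) (g : B ⟶ A (j + 1)),
    (∀ k : ℕ, 1 ≤ k → ∀ φ : B⟦(k : ℤ)⟧ ⟶ A (j + k + 2), φ = 0) ∧ g ≫ f (j + 1) = 0

/-- one step in the construction of a Postnikov system -/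
noncomputable def convStep (A : ℕ → D) (f : ∀ j, A j ⟶ A (j + 1))
    (hcpx : ∀ j, f j ≫ f (j + 1) = 0)
    (hvan2 : ∀ j k : ℕ, 1 ≤ k → ∀ φ : (A j)⟦(k : ℤ)⟧ ⟶ A (j + k + 2), φ = 0)
    (j : ℕ) (s : ConvStage A f j) :
    Σ' (t : ConvStage A f (j + 1)) (h : A (j + 1) ⟶ t.1) (w : t.1 ⟶ (s.1)⟦(1 : ℤ)⟧),
      (Triangle.mk s.2.1 h w ∈ distTriang D) ∧ f (j + 1) = h ≫ t.2.1 :=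
  Classical.choice (by
    obtain ⟨B, g, V, Zp⟩ := s
    obtain ⟨Y, h, w, hT⟩ := Pretriangulated.distinguished_cocone_triangle g
    obtain ⟨g'0, hg'0⟩ : ∃ g'0 : Y ⟶ A (j + 1 + 1), f (j + 1) = h ≫ g'0 :=
      Triangle.yoneda_exact₂ _ hT (f (j + 1)) Zp
    have g' : Y ⟶ A (j + 1 + 1) := g'0
    have hg' : f (j + 1) = h ≫ g'0 := hg'0
    have V' : ∀ k : ℕ, 1 ≤ k → ∀ φ : Y⟦(k : ℤ)⟧ ⟶ A (j + 1 + k + 2), φ = 0 :=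
      van_step A hT (fun k hk => hvan2 (j + 1) k hk) V
    have Z' : g'0 ≫ f (j + 1 + 1) = 0 := by
      have h0 : h ≫ (g'0 ≫ f (j + 1 + 1)) = 0 := by
        rw [← Category.assoc, ← hg', hcpx]
      obtain ⟨ψ, hψ⟩ : ∃ ψ : B⟦(1 : ℤ)⟧ ⟶ A (j + 1 + 1 + 1), g'0 ≫ f (j + 1 + 1) = w ≫ ψ :=
        Triangle.yoneda_exact₃ _ hT _ h0
      have hψ0 : ψ = 0 :=
        hom_zero_congr A (by norm_num) (by omega) (V 1 le_rfl) ψ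
      rw [hψ, hψ0, Limits.comp_zero]
    exact ⟨⟨⟨Y, g'0, V', Z'⟩, h, w, hT, hg'⟩⟩)

/-- the tower of partial data, built by recursion -/
noncomputable def convTower (A : ℕ → D) (f : ∀ j, A j ⟶ A (j + 1))
    (hcpx : ∀ j, f j ≫ f (j + 1) = 0)
    (hvan2 : ∀ j k : ℕ, 1 ≤ k → ∀ φ : (A j)⟦(k : ℤ)⟧ ⟶ A (j + k + 2), φ = 0) :
    ∀ j : ℕ, ConvStage A f j :=
  fun j => Nat.rec
    ⟨A 0, f 0, fun k hk φ => hvan2 0 k hk φ, hcpx 0⟩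
    (fun j s => (convStep A f hcpx hvan2 j s).1) j

/-- If `Hom(A_j[k], A_{j+k+1}) = 0` for all `j ≥ 0`, `k ≥ 1`, then any two convolutions
of the complex `A_0 → ⋯ → A_n` are isomorphic; if moreover
`Hom(A_j[k], A_{j+k+2}) = 0` for all `j ≥ 0`, `k ≥ 1`, then a convolution exists. -/
theorem convolution_unique_and_exists
    (n : ℕ) (A : ℕ → D) (f : ∀ j, A j ⟶ A (j + 1))
    (hcpx : ∀ j, f j ≫ f (j + 1) = 0)
    (hvan1 : ∀ (j k : ℕ), 1 ≤ k → ∀ φ : (A j)⟦(k : ℤ)⟧ ⟶ A (j + k + 1), φ = 0) :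
    (∀ Z Z', IsConvolution n A f Z → IsConvolution n A f Z' → Nonempty (Z ≅ Z')) ∧
    ((∀ (j k : ℕ), 1 ≤ k → ∀ φ : (A j)⟦(k : ℤ)⟧ ⟶ A (j + k + 2), φ = 0) →
      ∃ Z, IsConvolution n A f Z) := by
  constructor
  · rintro Z Z' ⟨B, e₀, g, h, hTri, hf0, hfs, ⟨eZ⟩⟩ ⟨B', e₀', g', h', hTri', hf0', hfs', ⟨eZ'⟩⟩
    have vB : ∀ i k : ℕ, 1 ≤ k → ∀ φ : (B i)⟦(k : ℤ)⟧ ⟶ A (i + k + 1), φ = 0 :=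
      van_tower A 1 hvan1 B e₀ g h hTri
    have key : ∀ j, ∃ φ : B j ≅ B' j, g j = φ.hom ≫ g' j := by
      intro j
      induction j with
      | zero =>
        refine ⟨e₀.symm ≪≫ e₀', (cancel_epi e₀.hom).1 ?_⟩
        rw [← hf0]
        simp [← hf0']
      | succ j ih =>
        obtain ⟨φ, hφ⟩ := ih
        obtain ⟨w, hw⟩ := hTri j
        obtain ⟨w', hw'⟩ := hTri' j
        obtain ⟨c0, hc₁, hc₂⟩ := Pretriangulated.complete_distinguished_triangle_morphism
          _ _ hw hw' φ.hom (𝟙 _) (by exact (Category.comp_id _).trans hφ)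
        let c : B (j + 1) ⟶ B' (j + 1) := c0
        have hc : h j ≫ c = h' j := by exact hc₁.trans (Category.id_comp _)
        have hiso : IsIso c := by
          exact Pretriangulated.isIso₃_of_isIso₁₂
            ({ hom₁ := φ.hom, hom₂ := 𝟙 _, hom₃ := c0,
               comm₁ := by exact (Category.comp_id _).trans hφ,
               comm₂ := hc₁, comm₃ := hc₂ } : Triangle.mk (g j) (h j) w ⟶
                 Triangle.mk (g' j) (h' j) w') hw hw' (inferInstance : IsIso φ.hom) (inferInstance : IsIso (𝟙 (A (j + 1))))
        refine ⟨@asIso _ _ _ _ c hiso, ?_⟩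
        have hdiff : h j ≫ (g (j + 1) - c ≫ g' (j + 1)) = 0 := by
          rw [Preadditive.comp_sub, ← hfs j, ← Category.assoc, hc, ← hfs' j, sub_self]
        obtain ⟨ψ, hψ⟩ := Triangle.yoneda_exact₃ _ hw _ hdiff
        have hψ0 : ψ = 0 :=
          hom_zero_congr A (by norm_num) (by omega) (vB j 1 le_rfl) ψ
        have h0 : g (j + 1) - c ≫ g' (j + 1) = 0 := by rw [hψ, hψ0, Limits.comp_zero]; rfl
        have := sub_eq_zero.1 h0
        simpa using this
    obtain ⟨φn, _⟩ := key n
    exact ⟨eZ ≪≫ φn ≪≫ eZ'.symm⟩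
  · intro hvan2
    let T := convTower A f hcpx hvan2
    refine ⟨(T n).1, (fun j => (T j).1), Iso.refl _, (fun j => (T j).2.1),
      (fun j => (convStep A f hcpx hvan2 j (T j)).2.1), ?_, ?_, ?_, ⟨Iso.refl _⟩⟩
    · intro j
      exact ⟨(convStep A f hcpx hvan2 j (T j)).2.2.1,
        (convStep A f hcpx hvan2 j (T j)).2.2.2.1⟩
    · exact (Category.id_comp _).symm
    · intro j
      exact (convStep A f hcpx hvan2 j (T j)).2.2.2.2
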